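/- With H(c) = (x−1)∂ + c and B(c) = (1−c)(x(x−1)∂ + bx − c + 1), the composite operator B(c+1)∘H(c) applied to f₁ = (1−x)^{−b} equals c²(c−b)·f₁, i.e. the b-function of the contiguity c²(c−b) appears as the eigenvalue of the composed up-step and down-step operators on this solution. -/

import Mathlib

open PowerSeries

/-- The Pochhammer symbol `(q)ₙ = q(q+1)⋯(q+n−1)`. -/
noncomputable def poch (q : ℂ) (n : ℕ) : ℂ := (ascPochhammer ℂ n).eval q

/-- The formal power series `f₁ = (1−x)^{−b} = Σ (b)ₙ/n! xⁿ`. -/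
noncomputable def f1 (b : ℂ) : PowerSeries ℂ :=
  PowerSeries.mk fun n => poch b n / n.factorial

/-- Formal differentiation `∂ = d/dx` on `ℂ⟦x⟧`. -/
noncomputable def Dps (f : PowerSeries ℂ) : PowerSeries ℂ := PowerSeries.derivative ℂ f

/-- `H(c) • f = (x−1)∂f + c·f`. -/
noncomputable def Hc (c : ℂ) (f : PowerSeries ℂ) : PowerSeries ℂ :=
  (X - 1) * Dps f + C (R := ℂ) c * f

/-- `B(c) • f = (1−c)(x(x−1)∂f + (bx − c + 1)·f)`. -/
noncomputable def Bc (b c : ℂ) (f : PowerSeries ℂ) : PowerSeries ℂ :=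
  C (R := ℂ) (1 - c) * (X * (X - 1) * Dps f + (C (R := ℂ) b * X - C (R := ℂ) c + 1) * f)

lemma poch_succ (b : ℂ) (n : ℕ) : poch b (n + 1) = poch b n * (b + n) := by
  simp [poch, ascPochhammer_succ_right]

lemma step (b : ℂ) (n : ℕ) :
    poch b (n + 1) / (n + 1).factorial * (n + 1) = (b + n) * (poch b n / n.factorial) := by
  have h1 : ((n + 1 : ℕ) : ℂ) ≠ 0 := by exact_mod_cast Nat.succ_ne_zero n
  have h2 : ((n.factorial : ℕ) : ℂ) ≠ 0 := by exact_mod_cast n.factorial_ne_zero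
  have h1' : ((n : ℂ) + 1) ≠ 0 := by exact_mod_cast h1
  have h3 : ((n : ℂ) * n.factorial + n.factorial) ≠ 0 := by
    simpa [add_mul, one_mul] using mul_ne_zero h1' h2
  rw [poch_succ, Nat.factorial_succ]
  push_cast
  field_simp [h3]

lemma key (b : ℂ) : (X - 1) * Dps (f1 b) = C (R := ℂ) (-b) * f1 b := by
  ext n
  rw [sub_mul, one_mul, map_sub]
  cases n with
  | zero =>
      simp [Dps, f1, coeff_derivative, poch_succ, poch]
  | succ n =>
      rw [coeff_succ_X_mul]
      simp only [Dps, f1, coeff_derivative, coeff_mk, coeff_C_mul]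
      have s2 := step b (n + 1)
      push_cast at s2 ⊢
      linear_combination -s2

lemma Dps_C_mul (a : ℂ) (f : PowerSeries ℂ) : Dps (C (R := ℂ) a * f) = C (R := ℂ) a * Dps f := by
  simp [Dps, ← smul_eq_C_mul]

/-- `(B(c+1) ∘ H(c)) • f₁ = c²(c−b)·f₁`: the b-function of the
contiguity appears as the eigenvalue of the composed contiguity operators. -/
theorem bfunction_on_f1 (b c : ℂ) :
    Bc b (c + 1) (Hc c (f1 b)) = C (R := ℂ) (c ^ 2 * (c - b)) * f1 b := by
  have h1 : Hc c (f1 b) = C (R := ℂ) (c - b) * f1 b := by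
    rw [Hc, key]
    rw [← add_mul, ← map_add]
    ring_nf
  rw [h1, Bc, Dps_C_mul]
  have h2 : X * ((X : PowerSeries ℂ) - 1) * (C (R := ℂ) (c - b) * Dps (f1 b))
      = C (R := ℂ) (c - b) * (X * ((X - 1) * Dps (f1 b))) := by ring
  rw [h2, key]
  simp only [map_mul, map_pow, map_sub, map_add, map_neg, map_one]
  ring
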